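/- Let f : ℝ → ℝ be C¹ satisfying |f(x)| ≤ K(1 + |x|^{2m+1}) and the one-sided bound (f(a) − f(b))(a − b) ≤ K(a − b)² for all a, b ∈ ℝ, with K ≥ 1. Let Φ_t(z) be the flow of ∂ₜΦ = f(Φ), Φ_0(z) = z. Then for all h ∈ [0,1] and z ∈ ℝ, sup_{s∈[0,h]} |Φ_s(z)| ≤ K e^{(2K+1)h/2}(1 + |z|). -/

import Mathlib

theorem stmt7 (f : ℝ → ℝ) (hf : ContDiff ℝ 1 f)
    (K : ℝ) (m : ℕ) (hK : 1 ≤ K)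
    (hgrow : ∀ x, |f x| ≤ K * (1 + |x| ^ (2 * m + 1)))
    (hone : ∀ a b : ℝ, (f a - f b) * (a - b) ≤ K * (a - b) ^ 2)
    (Φ : ℝ → ℝ → ℝ) (hΦ0 : ∀ z, Φ 0 z = z)
    (hflow : ∀ z, ∀ t ∈ Set.Icc (0 : ℝ) 1, HasDerivAt (fun s => Φ s z) (f (Φ t z)) t)
    (h : ℝ) (hh : h ∈ Set.Icc (0 : ℝ) 1) (z : ℝ) :
    ∀ s ∈ Set.Icc (0 : ℝ) h, |Φ s z| ≤ K * Real.exp ((2 * K + 1) * h / 2) * (1 + |z|) := by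
  obtain ⟨hh0, hh1⟩ := hh
  have hK0 : (0 : ℝ) < K := lt_of_lt_of_le one_pos hK
  have hsub : Set.Icc (0 : ℝ) h ⊆ Set.Icc (0 : ℝ) 1 := Set.Icc_subset_Icc le_rfl hh1
  -- derivative of square
  have hderiv : ∀ t ∈ Set.Icc (0 : ℝ) h,
      HasDerivAt (fun s => Φ s z ^ 2) (2 * Φ t z * f (Φ t z)) t := by
    intro t ht
    have := (hflow z t (hsub ht)).fun_pow 2
    simpa [mul_comm, mul_assoc, mul_left_comm] using this
  have hcont : ContinuousOn (fun s => Φ s z ^ 2) (Set.Icc 0 h) :=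
    fun t ht => (hderiv t ht).continuousAt.continuousWithinAt
  -- bound on f 0
  have hf0 : |f 0| ≤ K := by
    have := hgrow 0
    simpa using this
  -- key Gronwall bound
  have key : ∀ s ∈ Set.Icc (0 : ℝ) h,
      (fun s => Φ s z ^ 2) s ≤ gronwallBound (z ^ 2) (2 * K + 1) (K ^ 2) (s - 0) := by
    apply le_gronwallBound_of_liminf_deriv_right_le
      (f' := fun t => 2 * Φ t z * f (Φ t z)) hcont
    · intro x hx r hr
      exact ((hderiv x (Set.mem_Icc.2 ⟨hx.1, hx.2.le⟩)).hasDerivWithinAt).liminf_right_slope_le hr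
    · rw [hΦ0 z]
    · intro x hx
      set u := Φ x z with hu
      have h1 : (f u - f 0) * (u - 0) ≤ K * (u - 0) ^ 2 := hone u 0
      have h2 : f 0 * u ≤ K * |u| := by
        calc f 0 * u ≤ |f 0 * u| := le_abs_self _
          _ = |f 0| * |u| := abs_mul _ _
          _ ≤ K * |u| := by apply mul_le_mul_of_nonneg_right hf0 (abs_nonneg u)
      have h3 : 2 * K * |u| ≤ u ^ 2 + K ^ 2 := by
        nlinarith [sq_nonneg (|u| - K), sq_abs u]
      nlinarith [sq_abs u]
  intro s hs
  have hKs : 0 < 2 * K + 1 := by linarith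
  have hb := key s hs
  simp only [sub_zero] at hb
  rw [gronwallBound_of_K_ne_0 (ne_of_gt hKs)] at hb
  set E := Real.exp ((2 * K + 1) * h) with hE
  have hexple : Real.exp ((2 * K + 1) * s) ≤ E := by
    apply Real.exp_le_exp.2
    have := hs.2
    nlinarith
  have hE1 : (1 : ℝ) ≤ E := by
    rw [hE]
    apply Real.one_le_exp
    positivity
  have hexp_pos : (0 : ℝ) < Real.exp ((2 * K + 1) * s) := Real.exp_pos _
  -- bound the square
  have hsq : Φ s z ^ 2 ≤ K ^ 2 * E * (1 + |z|) ^ 2 := by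
    have h1 : z ^ 2 * Real.exp ((2 * K + 1) * s) ≤ z ^ 2 * E :=
      mul_le_mul_of_nonneg_left hexple (sq_nonneg z)
    have h2 : K ^ 2 / (2 * K + 1) * (Real.exp ((2 * K + 1) * s) - 1) ≤ K ^ 2 * E := by
      have hd : K ^ 2 / (2 * K + 1) ≤ K ^ 2 := by
        rw [div_le_iff₀ hKs]; nlinarith
      have hse : Real.exp ((2 * K + 1) * s) - 1 ≤ E := by linarith
      have hge1 : (1:ℝ) ≤ Real.exp ((2 * K + 1) * s) := by
        apply Real.one_le_exp; have := hs.1; positivity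
      have := mul_le_mul hd hse (by linarith) (by positivity)
      linarith [this]
    have hz2 : z ^ 2 ≤ K ^ 2 * z ^ 2 := by
      nlinarith [mul_nonneg (by nlinarith : (0:ℝ) ≤ K ^ 2 - 1) (sq_nonneg z)]
    nlinarith [sq_abs z, abs_nonneg z, sq_nonneg K, mul_le_mul_of_nonneg_right hz2 (le_of_lt (Real.exp_pos ((2*K+1)*h))), hE1]
  have hrhs : K * Real.exp ((2 * K + 1) * h / 2) * (1 + |z|) ≥ 0 := by positivity
  have hrsq : (K * Real.exp ((2 * K + 1) * h / 2) * (1 + |z|)) ^ 2 = K ^ 2 * E * (1 + |z|) ^ 2 := by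
    have hE2 : Real.exp ((2 * K + 1) * h / 2) ^ 2 = E := by
      rw [sq, ← Real.exp_add, hE]; ring_nf
    rw [mul_pow, mul_pow, hE2]
  nlinarith [sq_abs (Φ s z), abs_nonneg (Φ s z), hsq, hrsq, hrhs]
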